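/- For all real numbers a, b, x and every natural number n, dⁿ/dxⁿ e^{a x² + b x} = H_n^{(2)}(2ax + b, a) · e^{a x² + b x}, where H_n^{(2)} is the two-variable Hermite–Kampé de Fériet polynomial. -/

import Mathlib

open Finset

/-- The two-variable Hermite–Kampé de Fériet polynomials. -/
noncomputable def hermiteKdF2 (n : ℕ) (x y : ℝ) : ℝ :=
  (n.factorial : ℝ) * ∑ k ∈ Finset.range (n / 2 + 1),
    x ^ (n - 2 * k) * y ^ k / ((n - 2 * k).factorial * k.factorial)

/-- Indicator-padded term of the Hermite–KdF polynomial. -/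
noncomputable def hkTerm (n k : ℕ) (x y : ℝ) : ℝ :=
  if 2 * k ≤ n then
    (n.factorial : ℝ) * x ^ (n - 2 * k) * y ^ k /
      ((n - 2 * k).factorial * k.factorial)
  else 0

lemma hkSum (n : ℕ) (x y : ℝ) :
    hermiteKdF2 n x y = ∑ k ∈ Finset.range (n + 1), hkTerm n k x y := by
  unfold hermiteKdF2
  rw [Finset.mul_sum]
  rw [show (∑ k ∈ Finset.range (n / 2 + 1),
      (n.factorial : ℝ) * (x ^ (n - 2 * k) * y ^ k / ((n - 2 * k).factorial * k.factorial)))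
      = ∑ k ∈ Finset.range (n / 2 + 1), hkTerm n k x y from
    Finset.sum_congr rfl fun k hk => by
      simp only [Finset.mem_range] at hk
      rw [hkTerm, if_pos (by omega)]
      ring]
  apply Finset.sum_subset
  · intro k hk
    simp only [Finset.mem_range] at hk ⊢
    omega
  · intro k _ hk
    simp only [Finset.mem_range] at hk
    rw [hkTerm, if_neg (by omega)]

lemma hkTerm_succ_succ (n k : ℕ) (x y : ℝ) :
    hkTerm (n + 2) (k + 1) x y
      = x * hkTerm (n + 1) (k + 1) x y + 2 * y * ((n : ℝ) + 1) * hkTerm n k x y := by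
  by_cases h : 2 * k ≤ n
  · rcases Nat.lt_or_ge (2 * k) n with hlt | hge
    · -- 2k < n : n = 2k + d + 1
      obtain ⟨d, rfl⟩ : ∃ d, n = 2 * k + d + 1 := ⟨n - 2 * k - 1, by omega⟩
      simp only [hkTerm, if_pos (show 2 * (k + 1) ≤ 2 * k + d + 1 + 2 by omega),
        if_pos (show 2 * (k + 1) ≤ 2 * k + d + 1 + 1 by omega),
        if_pos (show 2 * k ≤ 2 * k + d + 1 by omega),
        show 2 * k + d + 1 + 2 - 2 * (k + 1) = d + 1 from by omega,
        show 2 * k + d + 1 + 1 - 2 * (k + 1) = d from by omega,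
        show 2 * k + d + 1 - 2 * k = d + 1 from by omega,
        show 2 * k + d + 1 + 2 = (2 * k + d + 2) + 1 from by omega,
        show 2 * k + d + 1 + 1 = (2 * k + d + 1) + 1 from by omega,
        Nat.factorial_succ]
      push_cast
      have h1 : ((d).factorial : ℝ) ≠ 0 := Nat.cast_ne_zero.mpr (Nat.factorial_ne_zero _)
      have h2 : ((k).factorial : ℝ) ≠ 0 := Nat.cast_ne_zero.mpr (Nat.factorial_ne_zero _)
      field_simp
      ring
    · -- 2k = n
      have hn : n = 2 * k := by omega
      subst hn
      simp only [hkTerm, if_pos (show 2 * (k + 1) ≤ 2 * k + 2 by omega),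
        if_neg (show ¬ 2 * (k + 1) ≤ 2 * k + 1 by omega),
        if_pos (show 2 * k ≤ 2 * k by omega),
        show 2 * k + 2 - 2 * (k + 1) = 0 from by omega,
        show 2 * k - 2 * k = 0 from by omega,
        show 2 * k + 2 = (2 * k + 1) + 1 from by omega,
        Nat.factorial_succ, Nat.factorial_zero, pow_zero, mul_zero]
      push_cast
      have hk1 : ((k + 1).factorial : ℝ) ≠ 0 := Nat.cast_ne_zero.mpr (Nat.factorial_ne_zero _)
      have hk0 : ((k).factorial : ℝ) ≠ 0 := Nat.cast_ne_zero.mpr (Nat.factorial_ne_zero _)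
      field_simp
      ring
  · simp only [hkTerm, if_neg (show ¬ 2 * (k + 1) ≤ n + 2 by omega),
      if_neg (show ¬ 2 * (k + 1) ≤ n + 1 by omega), if_neg h]
    ring

lemma hermite_rec (n : ℕ) (x y : ℝ) :
    hermiteKdF2 (n + 2) x y
      = x * hermiteKdF2 (n + 1) x y + 2 * y * ((n : ℝ) + 1) * hermiteKdF2 n x y := by
  rw [hkSum (n + 2), hkSum (n + 1), hkSum n, Finset.mul_sum, Finset.mul_sum]
  rw [Finset.sum_range_succ' (fun k => hkTerm (n + 2) k x y) (n + 2)]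
  rw [Finset.sum_range_succ (fun k => hkTerm (n + 2) (k + 1) x y) (n + 1)]
  rw [Finset.sum_range_succ' (fun k => x * hkTerm (n + 1) k x y) (n + 1)]
  have htop : hkTerm (n + 2) (n + 1 + 1) x y = 0 := by
    rw [hkTerm, if_neg (by omega)]
  have h0 : hkTerm (n + 2) 0 x y = x * hkTerm (n + 1) 0 x y := by
    simp only [hkTerm, if_pos (show 2 * 0 ≤ n + 2 by omega),
      if_pos (show 2 * 0 ≤ n + 1 by omega), Nat.mul_zero, Nat.sub_zero,
      show n + 2 = (n + 1) + 1 from rfl, Nat.factorial_succ, pow_succ, pow_zero,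
      Nat.factorial_zero]
    push_cast
    have h1 : ((n + 1).factorial : ℝ) ≠ 0 := Nat.cast_ne_zero.mpr (Nat.factorial_ne_zero _)
    field_simp
  have hsum : (∑ k ∈ Finset.range (n + 1), hkTerm (n + 2) (k + 1) x y)
      = ∑ k ∈ Finset.range (n + 1),
          (x * hkTerm (n + 1) (k + 1) x y + 2 * y * ((n : ℝ) + 1) * hkTerm n k x y) :=
    Finset.sum_congr rfl fun k _ => hkTerm_succ_succ n k x y
  rw [hsum, Finset.sum_add_distrib, htop, h0]
  ring

lemma hermite_rec' (n : ℕ) (x y : ℝ) :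
    hermiteKdF2 (n + 1) x y
      = x * hermiteKdF2 n x y + 2 * y * (n : ℝ) * hermiteKdF2 (n - 1) x y := by
  cases n with
  | zero => simp [hermiteKdF2]
  | succ m =>
    have := hermite_rec m x y
    push_cast at this ⊢
    simpa using this

lemma hkTerm_hasDerivAt (n k : ℕ) (a b x : ℝ) :
    HasDerivAt (fun t => hkTerm (n + 1) k (2 * a * t + b) a)
      (2 * a * ((n : ℝ) + 1) * hkTerm n k (2 * a * x + b) a) x := by
  have hb : HasDerivAt (fun t : ℝ => 2 * a * t + b) (2 * a) x := by
    simpa using ((hasDerivAt_id x).const_mul (2 * a)).add_const b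
  by_cases h : 2 * k ≤ n
  · obtain ⟨d, rfl⟩ : ∃ d, n = 2 * k + d := ⟨n - 2 * k, by omega⟩
    have H : HasDerivAt
        (fun t => ((2 * k + d + 1).factorial : ℝ) * (2 * a * t + b) ^ (d + 1) * a ^ k /
          ((d + 1).factorial * k.factorial))
        ((((2 * k + d + 1).factorial : ℝ) * (((d + 1 : ℕ) : ℝ) * (2 * a * x + b) ^ d * (2 * a)))
          * a ^ k / ((d + 1).factorial * k.factorial)) x := by
      have := (((hb.pow (d + 1)).const_mul ((2 * k + d + 1).factorial : ℝ)).mul_const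
        (a ^ k)).div_const (((d + 1).factorial : ℝ) * k.factorial)
      simpa [Nat.add_sub_cancel] using this
    have hfun : (fun t => hkTerm (2 * k + d + 1) k (2 * a * t + b) a)
        = fun t => ((2 * k + d + 1).factorial : ℝ) * (2 * a * t + b) ^ (d + 1) * a ^ k /
          ((d + 1).factorial * k.factorial) := by
      funext t
      rw [hkTerm, if_pos (by omega), show 2 * k + d + 1 - 2 * k = d + 1 from by omega]
    rw [hfun]
    convert H using 1
    rw [hkTerm, if_pos (by omega), show 2 * k + d - 2 * k = d from by omega,
      show 2 * k + d + 1 = (2 * k + d) + 1 from rfl, Nat.factorial_succ,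
      Nat.factorial_succ]
    push_cast
    have h1 : ((d).factorial : ℝ) ≠ 0 := Nat.cast_ne_zero.mpr (Nat.factorial_ne_zero _)
    have h2 : ((k).factorial : ℝ) ≠ 0 := Nat.cast_ne_zero.mpr (Nat.factorial_ne_zero _)
    field_simp
  · by_cases h2 : 2 * k ≤ n + 1
    · -- 2k = n+1
      have hn : n + 1 = 2 * k := by omega
      have hfun : (fun t => hkTerm (n + 1) k (2 * a * t + b) a)
          = fun _ => ((n + 1).factorial : ℝ) * a ^ k / ((0).factorial * k.factorial) := by
        funext t
        rw [hkTerm, if_pos h2, show n + 1 - 2 * k = 0 from by omega, pow_zero, mul_one]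
      rw [hfun, hkTerm, if_neg (by omega), mul_zero]
      exact hasDerivAt_const x _
    · have hfun : (fun t => hkTerm (n + 1) k (2 * a * t + b) a) = fun _ => (0 : ℝ) := by
        funext t
        rw [hkTerm, if_neg h2]
      rw [hfun, hkTerm, if_neg (by omega), mul_zero]
      exact hasDerivAt_const x _

lemma hermite_hasDerivAt (n : ℕ) (a b x : ℝ) :
    HasDerivAt (fun t => hermiteKdF2 n (2 * a * t + b) a)
      (2 * a * (n : ℝ) * hermiteKdF2 (n - 1) (2 * a * x + b) a) x := by
  cases n with
  | zero =>
    have hfun : (fun t => hermiteKdF2 0 (2 * a * t + b) a) = fun _ => (1 : ℝ) := by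
      funext t; simp [hermiteKdF2]
    rw [hfun]
    simpa using hasDerivAt_const x (1 : ℝ)
  | succ m =>
    have hfun : (fun t => hermiteKdF2 (m + 1) (2 * a * t + b) a)
        = fun t => ∑ k ∈ Finset.range (m + 2), hkTerm (m + 1) k (2 * a * t + b) a := by
      funext t; exact hkSum (m + 1) _ a
    rw [hfun]
    have H := HasDerivAt.fun_sum (fun k (_ : k ∈ Finset.range (m + 2)) =>
      hkTerm_hasDerivAt m k a b x)
    refine H.congr_deriv ?_
    rw [Finset.sum_range_succ, show hkTerm m (m + 1) (2 * a * x + b) a = 0 from by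
      rw [hkTerm, if_neg (by omega)], mul_zero, add_zero, ← Finset.mul_sum,
      ← hkSum m]
    push_cast
    ring

theorem iteratedDeriv_exp_quadratic (a b x : ℝ) (n : ℕ) :
    iteratedDeriv n (fun t => Real.exp (a * t ^ 2 + b * t)) x =
      hermiteKdF2 n (2 * a * x + b) a * Real.exp (a * x ^ 2 + b * x) := by
  induction n generalizing x with
  | zero =>
    simp [iteratedDeriv_zero, hermiteKdF2]
  | succ n ih =>
    rw [iteratedDeriv_succ]
    have hfun : iteratedDeriv n (fun t => Real.exp (a * t ^ 2 + b * t))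
        = fun t => hermiteKdF2 n (2 * a * t + b) a * Real.exp (a * t ^ 2 + b * t) :=
      funext fun t => ih t
    rw [hfun]
    have h1 : HasDerivAt (fun t : ℝ => a * t ^ 2 + b * t) (2 * a * x + b) x := by
      have := ((hasDerivAt_pow 2 x).const_mul a).fun_add ((hasDerivAt_id x).const_mul b)
      simpa using this.congr_deriv (by push_cast; ring)
    have h3 := (hermite_hasDerivAt n a b x).fun_mul h1.exp
    rw [h3.deriv, hermite_rec' n (2 * a * x + b) a]
    ring
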